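/- Let X be a metrizable space and Z a topological space in which every closed set F is a closure-Gδ set (i.e. F = ⋂ₙ Wₙ = ⋂ₙ cl(Wₙ) for some open sets Wₙ). If f : X × Y → Z is continuous in the first variable for each fixed y ∈ Y and Borel measurable of class α in the second variable for each fixed x ∈ X (α a countable ordinal), then f is Borel measurable of class α+1 on X × Y. -/

import Mathlib

/-- The additive Borel class `𝒜_α(T)`: `𝒜₀` is the open sets, and for `α > 0`,
`𝒜_α` consists of countable unions of sets from `⋃_{β<α} ℳ_β`, where
`ℳ_β = {s | sᶜ ∈ 𝒜_β}` is the multiplicative class. -/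
noncomputable def addClass (T : Type*) [TopologicalSpace T] : Ordinal.{0} → Set (Set T) :=
  Ordinal.lt_wf.fix fun α rec =>
    if α = 0 then {s | IsOpen s}
    else {s : Set T | ∃ f : ℕ → Set T,
      (∀ n : ℕ, ∃ β : Ordinal, ∃ h : β < α, (f n)ᶜ ∈ rec β h) ∧ s = ⋃ n, f n}

/-- A function is Borel measurable of class `α` if preimages of open sets are in `𝒜_α`. -/
def BorelMeasClass {S Z : Type*} [TopologicalSpace S] [TopologicalSpace Z]
    (α : Ordinal.{0}) (f : S → Z) : Prop :=
  ∀ U : Set Z, IsOpen U → f ⁻¹' U ∈ addClass S α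

open Set Metric Topology
open scoped ENNReal

section API

variable {T : Type*} [TopologicalSpace T]

lemma addClass_eq (α : Ordinal.{0}) :
    addClass T α =
      if α = 0 then {s | IsOpen s}
      else {s : Set T | ∃ f : ℕ → Set T,
        (∀ n : ℕ, ∃ β : Ordinal, ∃ _ : β < α, (f n)ᶜ ∈ addClass T β) ∧ s = ⋃ n, f n} :=
  Ordinal.lt_wf.fix_eq _ α

lemma mem_addClass_zero {s : Set T} : s ∈ addClass T 0 ↔ IsOpen s := by
  rw [show addClass T 0 = {s | IsOpen s} from by rw [addClass_eq]; simp]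
  rfl

lemma mem_addClass_of_ne {α : Ordinal.{0}} (hα : α ≠ 0) {s : Set T} :
    s ∈ addClass T α ↔ ∃ f : ℕ → Set T,
      (∀ n : ℕ, ∃ β : Ordinal, ∃ _ : β < α, (f n)ᶜ ∈ addClass T β) ∧ s = ⋃ n, f n := by
  have h := addClass_eq (T := T) α
  rw [if_neg hα] at h
  rw [h]; rfl

/-- Countable unions of sets from lower multiplicative classes are in `𝒜_α`. -/
lemma addClass_iUnion_lt {α : Ordinal.{0}} {κ : Type*} [Countable κ] (s : κ → Set T)
    (h : ∀ k, ∃ β : Ordinal, β < α ∧ (s k)ᶜ ∈ addClass T β) :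
    ⋃ k, s k ∈ addClass T α := by
  rcases isEmpty_or_nonempty κ with hκ | hκ
  · rw [iUnion_of_empty]
    rcases eq_or_ne α 0 with rfl | hα
    · exact mem_addClass_zero.2 isOpen_empty
    · refine (mem_addClass_of_ne hα).2 ⟨fun _ => ∅, fun n => ⟨0, pos_iff_ne_zero.2 hα,
        ?_⟩, by simp⟩
      simpa using mem_addClass_zero.2 isOpen_univ
  · have hα : α ≠ 0 := by
      obtain ⟨k⟩ := hκ
      obtain ⟨β, hβ, -⟩ := h k
      exact fun h0 => absurd (h0 ▸ hβ) (fun h => not_lt_zero h)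
    obtain ⟨u, hu⟩ := exists_surjective_nat κ
    refine (mem_addClass_of_ne hα).2 ⟨fun n => s (u n), fun n => ?_, (hu.iUnion_comp s).symm⟩
    obtain ⟨β, hβ, hm⟩ := h (u n)
    exact ⟨β, hβ, hm⟩

/-- `𝒜_α` is closed under countable unions. -/
lemma addClass_iUnion {α : Ordinal.{0}} {κ : Type*} [Countable κ] (s : κ → Set T)
    (h : ∀ k, s k ∈ addClass T α) : ⋃ k, s k ∈ addClass T α := by
  rcases eq_or_ne α 0 with rfl | hα
  · exact mem_addClass_zero.2 (isOpen_iUnion fun k => mem_addClass_zero.1 (h k))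
  · choose g hg hgs using fun k => (mem_addClass_of_ne hα).1 (h k)
    have : ⋃ k, s k = ⋃ p : κ × ℕ, g p.1 p.2 := by
      simp_rw [iUnion_prod']
      exact iUnion_congr hgs
    rw [this]
    exact addClass_iUnion_lt _ fun p => by
      obtain ⟨β, hβ, hm⟩ := hg p.1 p.2; exact ⟨β, hβ, hm⟩

/-- Enumerate the ordinals below a countable nonzero ordinal. -/
lemma exists_enum {α : Ordinal.{0}} (hα : α ≠ 0) (hc : α.card ≤ Cardinal.aleph0) :
    ∃ e : ℕ → Ordinal.{0}, (∀ n, e n < α) ∧ ∀ β, β < α → ∃ n, e n = β := by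
  have hne : Nonempty (Set.Iio α) := ⟨⟨0, pos_iff_ne_zero.2 hα⟩⟩
  have hcnt : Countable (Set.Iio α) := by
    rw [← Cardinal.mk_le_aleph0_iff, Ordinal.mk_Iio_ordinal]
    exact (Cardinal.lift_le.mpr hc).trans_eq Cardinal.lift_aleph0
  obtain ⟨g, hg⟩ := exists_surjective_nat (Set.Iio α)
  exact ⟨fun n => (g n).1, fun n => (g n).2, fun β hβ =>
    (hg ⟨β, hβ⟩).imp fun n hn => congrArg Subtype.val hn⟩

end API

section Fsigma

variable {X : Type*} [TopologicalSpace X] [TopologicalSpace.MetrizableSpace X]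

/-- In a metrizable space, every open set is a countable union of closed subsets. -/
lemma exists_closed_decomp {O : Set X} (hO : IsOpen O) :
    ∃ K : ℕ → Set X, (∀ m, IsClosed (K m)) ∧ (∀ m, K m ⊆ O) ∧ O = ⋃ m, K m := by
  letI : MetricSpace X := TopologicalSpace.metrizableSpaceMetric X
  refine ⟨fun m => {x | ((m : ℝ≥0∞))⁻¹ ≤ EMetric.infEdist x Oᶜ}, fun m => ?_, fun m x hx => ?_,
    Set.Subset.antisymm (fun x hx => ?_) (Set.iUnion_subset fun m x hx => ?_)⟩
  · exact isClosed_le continuous_const EMetric.continuous_infEdist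
  · by_contra hxO
    replace hx : ((m : ℝ≥0∞))⁻¹ ≤ EMetric.infEdist x Oᶜ := hx
    have h0 : EMetric.infEdist x Oᶜ = 0 := EMetric.infEdist_zero_of_mem hxO
    rw [h0, le_zero_iff, ENNReal.inv_eq_zero] at hx
    exact ENNReal.natCast_ne_top m hx
  · have hxc : x ∉ Oᶜ := fun h => h hx
    have h0 : EMetric.infEdist x Oᶜ ≠ 0 :=
      fun h => hxc ((EMetric.mem_iff_infEdist_zero_of_closed hO.isClosed_compl).2 h)
    obtain ⟨m, hm⟩ := ENNReal.exists_inv_nat_lt h0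
    exact Set.mem_iUnion.2 ⟨m, le_of_lt hm⟩
  · by_contra hxO
    replace hx : ((m : ℝ≥0∞))⁻¹ ≤ EMetric.infEdist x Oᶜ := hx
    have h0 : EMetric.infEdist x Oᶜ = 0 := EMetric.infEdist_zero_of_mem hxO
    rw [h0, le_zero_iff, ENNReal.inv_eq_zero] at hx
    exact ENNReal.natCast_ne_top m hx

end Fsigma

section Cover

variable {X : Type*} [MetricSpace X]

/-- A σ-discrete cover of a metric space by open sets of radius `< R`. -/
lemma sigma_disc_cover {R : ℝ} (hR : 0 < R) :
    ∃ V : ℕ → X → Set X,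
      (∀ m z, IsOpen (V m z)) ∧ (∀ m z, V m z ⊆ Metric.ball z R) ∧
      (∀ m (x : X), ∃ t ∈ 𝓝 x, {z | (V m z ∩ t).Nonempty}.Subsingleton) ∧
      (∀ x : X, ∃ m z, x ∈ V m z) := by
  classical
  set r : ℕ → ℝ := fun n => R * (1 / 2) ^ n / 16 with hr
  have hrpos : ∀ n, 0 < r n := fun n => by positivity
  have hrR : ∀ n, 4 * r n < R / 2 := by
    intro n
    have h1 : (1 / 2 : ℝ) ^ n ≤ 1 := pow_le_one₀ (by norm_num) (by norm_num)
    rw [hr]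
    nlinarith [hR, h1]
  set lt : X → X → Prop := WellOrderingRel with hlt
  have hwf : WellFounded lt := (IsWellFounded.wf : WellFounded (WellOrderingRel : X → X → Prop))
  set C : ℕ → X → Set X := fun n z =>
    {x | dist x z + 3 * r n < R / 2 ∧ ∀ z', lt z' z → R / 2 ≤ dist x z'} with hC
  refine ⟨fun n z => ⋃ x ∈ C n z, Metric.ball x (r n), fun n z => ?_, fun n z => ?_, fun n w => ?_,
    fun x => ?_⟩
  · exact isOpen_biUnion fun x _ => Metric.isOpen_ball
  · intro q hq
    simp only [Set.mem_iUnion] at hq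
    obtain ⟨x, hx, hq⟩ := hq
    have h1 : dist q x < r n := Metric.mem_ball.1 hq
    have h2 : dist x z + 3 * r n < R / 2 := hx.1
    have := dist_triangle q x z
    have hR2 : R / 2 < R := by linarith
    exact Metric.mem_ball.2 (by nlinarith [hrpos n])
  · refine ⟨Metric.ball w (r n / 2), Metric.ball_mem_nhds w (by positivity), ?_⟩
    rintro z₁ hz₁ z₂ hz₂
    obtain ⟨a₁, ha₁, ha₁w⟩ := hz₁
    obtain ⟨a₂, ha₂, ha₂w⟩ := hz₂
    simp only [Set.mem_iUnion] at ha₁ ha₂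
    obtain ⟨x₁, hx₁, ha₁⟩ := ha₁
    obtain ⟨x₂, hx₂, ha₂⟩ := ha₂
    have hd : dist x₁ x₂ < 3 * r n := by
      have d1 : dist a₁ x₁ < r n := Metric.mem_ball.1 ha₁
      have d2 : dist a₂ x₂ < r n := Metric.mem_ball.1 ha₂
      have d3 : dist a₁ w < r n / 2 := Metric.mem_ball.1 ha₁w
      have d4 : dist a₂ w < r n / 2 := Metric.mem_ball.1 ha₂w
      have t1 := dist_triangle4 x₁ a₁ a₂ x₂
      have t2 := dist_triangle a₁ w a₂
      rw [dist_comm x₁ a₁] at t1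
      rw [dist_comm a₂ x₂] at t1
      rw [dist_comm w a₂] at t2
      rw [dist_comm x₂ a₂] at t1
      linarith
    by_contra hne
    rcases trichotomous_of lt z₁ z₂ with h | h | h
    · -- z₁ < z₂ : x₂'s minimality gives R/2 ≤ dist x₂ z₁, but x₁'s core gives the opposite
      have h1 : R / 2 ≤ dist x₂ z₁ := hx₂.2 z₁ h
      have h2 : dist x₁ z₁ + 3 * r n < R / 2 := hx₁.1
      have := dist_triangle x₂ x₁ z₁
      rw [dist_comm x₂ x₁] at this
      linarith
    · exact hne h
    · have h1 : R / 2 ≤ dist x₁ z₂ := hx₁.2 z₂ h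
      have h2 : dist x₂ z₂ + 3 * r n < R / 2 := hx₂.1
      have := dist_triangle x₁ x₂ z₂
      linarith [dist_comm x₁ x₂ ▸ hd]
  · -- cover
    have hSne : ({z | dist x z < R / 2} : Set X).Nonempty :=
      ⟨x, by simpa using by linarith⟩
    set z₀ := hwf.min {z | dist x z < R / 2} hSne with hz₀
    have hmem : dist x z₀ < R / 2 := hwf.min_mem _ hSne
    have hle : ∀ z', lt z' z₀ → R / 2 ≤ dist x z' := by
      intro z' hz'
      by_contra hlt'
      exact hwf.not_lt_min {z | dist x z < R / 2} (show dist x z' < R / 2 from not_le.1 hlt') hz'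
    obtain ⟨n, hn⟩ : ∃ n : ℕ, 3 * r n < R / 2 - dist x z₀ := by
      have h0 : (0:ℝ) < R / 2 - dist x z₀ := by linarith
      have hR' : (0:ℝ) < 3 * R := by positivity
      obtain ⟨n, hn⟩ := exists_pow_lt_of_lt_one
        (show (0:ℝ) < (R / 2 - dist x z₀) * 8 / (3 * R) from div_pos (by nlinarith) hR')
        (show (1/2 : ℝ) < 1 by norm_num)
      refine ⟨n, ?_⟩
      rw [lt_div_iff₀ hR'] at hn
      rw [hr]
      have h2 : (0:ℝ) < (1/2:ℝ)^n := by positivity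
      nlinarith [hn, h0, h2]
    refine ⟨n, z₀, Set.mem_biUnion ?_ (Metric.mem_ball_self (hrpos n))⟩
    exact ⟨by linarith, hle⟩

end Cover

section KeyLemmas

universe u

variable {X Y : Type*} [TopologicalSpace X] [TopologicalSpace.MetrizableSpace X]
  [TopologicalSpace Y]

/-- Key lemma: a discrete union of products (closed set in `X`) × (`ℳ_δ` set in `Y`)
is in `ℳ_δ(X × Y)`. -/
lemma discrete_union_closed_prod :
    ∀ δ : Ordinal.{0}, δ.card ≤ Cardinal.aleph0 →
    ∀ {ι : Type u} (E : ι → Set X) (N : ι → Set Y),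
    (∀ i, IsClosed (E i)) →
    (∀ x : X, ∃ t ∈ 𝓝 x, {i | (E i ∩ t).Nonempty}.Subsingleton) →
    (∀ i, (N i)ᶜ ∈ addClass Y δ) →
    (⋃ i, E i ×ˢ N i)ᶜ ∈ addClass (X × Y) δ := by
  intro δ
  induction δ using Ordinal.induction with
  | _ δ IH =>
  intro hδc ι E N hEcl hdisc hN
  have hdisj : ∀ i j (x : X), x ∈ E i → x ∈ E j → i = j := by
    intro i j x hi hj
    obtain ⟨t, ht, hsub⟩ := hdisc x
    exact hsub ⟨x, hi, mem_of_mem_nhds ht⟩ ⟨x, hj, mem_of_mem_nhds ht⟩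
  have hlfE : LocallyFinite E := by
    intro x
    obtain ⟨t, ht, hsub⟩ := hdisc x
    exact ⟨t, ht, hsub.finite⟩
  rcases eq_or_ne δ 0 with rfl | hδ
  · -- class 0 : everything is closed, and a discrete union of closed sets is closed
    have hNcl : ∀ i, IsClosed (N i) := fun i => isOpen_compl_iff.1 (mem_addClass_zero.1 (hN i))
    have hlf : LocallyFinite (fun i => E i ×ˢ N i) := by
      intro p
      obtain ⟨t, ht, hsub⟩ := hdisc p.1
      refine ⟨t ×ˢ (univ : Set Y), prod_mem_nhds ht Filter.univ_mem, ?_⟩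
      refine Set.Finite.subset hsub.finite ?_
      rintro i ⟨⟨a, b⟩, ⟨⟨haE, hbN⟩, hat, -⟩⟩
      exact ⟨a, haE, hat⟩
    exact mem_addClass_zero.2
      (hlf.isClosed_iUnion fun i => (hEcl i).prod (hNcl i)).isOpen_compl
  · -- positive class
    choose g hg hNg using fun i => (mem_addClass_of_ne hδ).1 (hN i)
    choose β hβlt hβm using hg
    obtain ⟨e, helt, hesurj⟩ := exists_enum hδ hδc
    choose j hj using fun i n => hesurj (β i n) (hβlt i n)
    have hUEcl : IsClosed (⋃ i, E i) := hlfE.isClosed_iUnion hEcl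
    obtain ⟨K, hKcl, hKsub, hKeq⟩ := exists_closed_decomp hUEcl.isOpen_compl
    have key : (⋃ i, E i ×ˢ N i)ᶜ =
        ⋃ w : ℕ ⊕ ℕ × ℕ,
          Sum.elim (fun m => K m ×ˢ (univ : Set Y))
            (fun q => ⋃ (i) (_ : j i q.1 = q.2), E i ×ˢ g i q.1) w := by
      rw [Set.iUnion_sum]
      ext ⟨x, y⟩
      constructor
      · intro h
        have h' : ∀ i, ¬ ((x, y) ∈ E i ×ˢ N i) := fun i hi => h (mem_iUnion.2 ⟨i, hi⟩)
        by_cases hx : ∃ i, x ∈ E i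
        · obtain ⟨i, hxi⟩ := hx
          have hy : y ∈ (N i)ᶜ := fun hy => h' i ⟨hxi, hy⟩
          rw [hNg i] at hy
          obtain ⟨n, hn⟩ := mem_iUnion.1 hy
          refine Or.inr (mem_iUnion.2 ⟨(n, j i n), ?_⟩)
          exact mem_iUnion.2 ⟨i, mem_iUnion.2 ⟨rfl, ⟨hxi, hn⟩⟩⟩
        · push_neg at hx
          have hxc : x ∈ (⋃ i, E i)ᶜ := fun hmem => by
            obtain ⟨i, hi⟩ := mem_iUnion.1 hmem
            exact hx i hi
          rw [hKeq] at hxc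
          obtain ⟨m, hm⟩ := mem_iUnion.1 hxc
          exact Or.inl (mem_iUnion.2 ⟨m, ⟨hm, mem_univ y⟩⟩)
      · rintro (hl | hr)
        · obtain ⟨m, hm, -⟩ := mem_iUnion.1 hl
          have hxc : x ∈ (⋃ i, E i)ᶜ := hKeq ▸ mem_iUnion.2 ⟨m, hm⟩
          intro hmem
          obtain ⟨i, hxi, -⟩ := mem_iUnion.1 hmem
          exact hxc (mem_iUnion.2 ⟨i, hxi⟩)
        · obtain ⟨q, hq⟩ := mem_iUnion.1 hr
          obtain ⟨i, hi⟩ := mem_iUnion.1 hq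
          obtain ⟨-, hxi, hyg⟩ := mem_iUnion.1 hi
          intro hmem
          obtain ⟨i', hxi', hyi'⟩ := mem_iUnion.1 hmem
          cases hdisj i i' x hxi hxi'
          have hy : y ∈ (N i)ᶜ := (hNg i) ▸ mem_iUnion.2 ⟨q.1, hyg⟩
          exact hy hyi'
    rw [key]
    refine addClass_iUnion_lt _ fun w => ?_
    rcases w with m | q
    · refine ⟨0, pos_iff_ne_zero.2 hδ, ?_⟩
      exact mem_addClass_zero.2 ((hKcl m).prod isClosed_univ).isOpen_compl
    · refine ⟨e q.2, helt q.2, ?_⟩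
      have hsub : (⋃ (i) (_ : j i q.1 = q.2), E i ×ˢ g i q.1) =
          ⋃ i : {i // j i q.1 = q.2}, E i.1 ×ˢ g i.1 q.1 := by
        rw [Set.iUnion_subtype]
      rw [Sum.elim_inr, hsub]
      refine IH (e q.2) (helt q.2)
        ((Ordinal.card_le_card (le_of_lt (helt q.2))).trans hδc)
        _ _ (fun i => hEcl i.1) ?_ ?_
      · intro x
        obtain ⟨t, ht, hsubs⟩ := hdisc x
        exact ⟨t, ht, fun a ha b hb => Subtype.ext (hsubs ha hb)⟩
      · rintro ⟨i, hi⟩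
        show (g i q.1)ᶜ ∈ addClass Y (e q.2)
        have := hβm i q.1
        rwa [← hj i q.1, hi] at this

/-- A σ-discrete union of products (open in `X`) × (`𝒜_α` in `Y`) is in `𝒜_α(X × Y)`,
for `α ≠ 0` countable. -/
lemma discrete_union_open_prod {α : Ordinal.{0}} (hα : α ≠ 0) (hc : α.card ≤ Cardinal.aleph0)
    {ι : Type u} (V : ι → Set X) (B : ι → Set Y) (hV : ∀ i, IsOpen (V i))
    (hdisc : ∀ x : X, ∃ t ∈ 𝓝 x, {i | (V i ∩ t).Nonempty}.Subsingleton)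
    (hB : ∀ i, B i ∈ addClass Y α) :
    ⋃ i, V i ×ˢ B i ∈ addClass (X × Y) α := by
  choose g hg hBg using fun i => (mem_addClass_of_ne hα).1 (hB i)
  choose β hβlt hβm using hg
  obtain ⟨e, helt, hesurj⟩ := exists_enum hα hc
  choose j hj using fun i n => hesurj (β i n) (hβlt i n)
  choose K hKcl hKsub hKeq using fun i => exists_closed_decomp (hV i)
  have key : ⋃ i, V i ×ˢ B i =
      ⋃ w : ℕ × ℕ × ℕ, ⋃ (i) (_ : j i w.2.1 = w.2.2), K i w.1 ×ˢ g i w.2.1 := by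
    ext ⟨x, y⟩
    constructor
    · intro h
      obtain ⟨i, hxi, hyi⟩ := mem_iUnion.1 h
      rw [hKeq i] at hxi
      obtain ⟨m, hm⟩ := mem_iUnion.1 hxi
      rw [hBg i] at hyi
      obtain ⟨n, hn⟩ := mem_iUnion.1 hyi
      refine mem_iUnion.2 ⟨(m, n, j i n), ?_⟩
      exact mem_iUnion.2 ⟨i, mem_iUnion.2 ⟨rfl, ⟨hm, hn⟩⟩⟩
    · intro h
      obtain ⟨w, hw⟩ := mem_iUnion.1 h
      obtain ⟨i, hi⟩ := mem_iUnion.1 hw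
      obtain ⟨-, hxm, hyn⟩ := mem_iUnion.1 hi
      refine mem_iUnion.2 ⟨i, ⟨hKsub i w.1 hxm, ?_⟩⟩
      rw [hBg i]
      exact mem_iUnion.2 ⟨w.2.1, hyn⟩
  rw [key]
  refine addClass_iUnion_lt _ fun w => ⟨e w.2.2, helt w.2.2, ?_⟩
  have hsub : (⋃ (i) (_ : j i w.2.1 = w.2.2), K i w.1 ×ˢ g i w.2.1) =
      ⋃ i : {i // j i w.2.1 = w.2.2}, K i.1 w.1 ×ˢ g i.1 w.2.1 := by
    rw [Set.iUnion_subtype]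
  rw [hsub]
  refine discrete_union_closed_prod (e w.2.2)
    ((Ordinal.card_le_card (le_of_lt (helt w.2.2))).trans hc)
    _ _ (fun i => hKcl i.1 w.1) ?_ ?_
  · intro x
    obtain ⟨t, ht, hsubs⟩ := hdisc x
    refine ⟨t, ht, fun a ha b hb => Subtype.ext (hsubs ?_ ?_)⟩
    · obtain ⟨p, hp1, hp2⟩ := ha
      exact ⟨p, hKsub a.1 w.1 hp1, hp2⟩
    · obtain ⟨p, hp1, hp2⟩ := hb
      exact ⟨p, hKsub b.1 w.1 hp1, hp2⟩
  · rintro ⟨i, hi⟩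
    show (g i w.2.1)ᶜ ∈ addClass Y (e w.2.2)
    have := hβm i w.2.1
    rwa [← hj i w.2.1, hi] at this

end KeyLemmas

theorem kuratowski_montgomery (X Y Z : Type*) [TopologicalSpace X]
    [TopologicalSpace.MetrizableSpace X] [TopologicalSpace Y] [TopologicalSpace Z]
    (hZ : ∀ F : Set Z, IsClosed F → ∃ W : ℕ → Set Z,
      (∀ n, IsOpen (W n)) ∧ F = ⋂ n, W n ∧ F = ⋂ n, closure (W n))
    (α : Ordinal.{0}) (hα : α.card ≤ Cardinal.aleph0)
    (f : X × Y → Z)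
    (hcont : ∀ y : Y, Continuous fun x => f (x, y))
    (hborel : ∀ x : X, BorelMeasClass α fun y => f (x, y)) :
    BorelMeasClass (α + 1) f := by
  intro U hU
  letI : MetricSpace X := TopologicalSpace.metrizableSpaceMetric X
  obtain ⟨W, hWopen, hWint, hWcl⟩ := hZ Uᶜ hU.isClosed_compl
  have hRpos : ∀ k : ℕ, (0:ℝ) < (1/2 : ℝ) ^ k := fun k => by positivity
  choose V hVopen hVball hVdisc hVcov using fun k : ℕ => sigma_disc_cover (X := X) (hRpos k)
  set M : ℕ → ℕ → Set (X × Y) := fun n k =>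
    {p : X × Y | ∀ m z, p.1 ∈ V k m z → f (z, p.2) ∈ (W n)ᶜ} with hM
  have hMcompl : ∀ n k, (M n k)ᶜ ∈ addClass (X × Y) α := by
    intro n k
    have hBz : ∀ z : X, {y : Y | f (z, y) ∈ W n} ∈ addClass Y α := fun z =>
      hborel z (W n) (hWopen n)
    have hkey : (M n k)ᶜ = ⋃ m : ℕ, ⋃ z : X, V k m z ×ˢ {y : Y | f (z, y) ∈ W n} := by
      ext ⟨x, y⟩
      simp only [hM, Set.mem_compl_iff, Set.mem_setOf_eq, not_forall, Set.mem_iUnion,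
        Set.mem_prod]
      constructor
      · rintro ⟨m, z, hxz, hfz⟩
        exact ⟨m, z, hxz, not_not.1 hfz⟩
      · rintro ⟨m, z, hxz, hfz⟩
        exact ⟨m, z, hxz, fun h => h hfz⟩
    rw [hkey]
    rcases eq_or_ne α 0 with rfl | hα0
    · refine mem_addClass_zero.2 (isOpen_iUnion fun m => isOpen_iUnion fun z => ?_)
      exact (hVopen k m z).prod (mem_addClass_zero.1 (hBz z))
    · exact addClass_iUnion _ fun m =>
        discrete_union_open_prod hα0 hα _ _ (hVopen k m) (hVdisc k m) (fun z => hBz z)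
  set Q : ℕ → ℕ → Set (X × Y) := fun n k₀ => ⋂ k, M n (k₀ + k) with hQ
  have hQcompl : ∀ n k₀, (Q n k₀)ᶜ ∈ addClass (X × Y) α := by
    intro n k₀
    rw [hQ]
    simp only [Set.compl_iInter]
    exact addClass_iUnion _ fun k => hMcompl n (k₀ + k)
  have hmain : f ⁻¹' U = ⋃ p : ℕ × ℕ, Q p.1 p.2 := by
    ext ⟨x, y⟩
    constructor
    · intro hfU
      have hUeq : U = ⋃ n, (closure (W n))ᶜ := by
        rw [← Set.compl_iInter, ← hWcl, compl_compl]
      have hfU' : f (x, y) ∈ ⋃ n, (closure (W n))ᶜ := hUeq ▸ hfU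
      obtain ⟨n, hn⟩ := Set.mem_iUnion.1 hfU'
      have hO : IsOpen ((fun x' => f (x', y)) ⁻¹' (closure (W n))ᶜ) :=
        (isClosed_closure).isOpen_compl.preimage (hcont y)
      obtain ⟨ε, hε, hball⟩ := Metric.isOpen_iff.1 hO x hn
      obtain ⟨k₀, hk₀⟩ := exists_pow_lt_of_lt_one hε (show (1/2:ℝ) < 1 by norm_num)
      refine Set.mem_iUnion.2 ⟨(n, k₀), Set.mem_iInter.2 fun k => ?_⟩
      intro m z hxz
      have hdist : dist x z < (1/2:ℝ) ^ (k₀ + k) :=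
        Metric.mem_ball.1 (hVball (k₀ + k) m z hxz)
      have hzx : dist z x < ε := by
        rw [dist_comm]
        calc dist x z < (1/2:ℝ) ^ (k₀ + k) := hdist
          _ ≤ (1/2:ℝ) ^ k₀ :=
            pow_le_pow_of_le_one (by norm_num) (by norm_num) (Nat.le_add_right _ _)
          _ < ε := hk₀
      have hz : f (z, y) ∈ (closure (W n))ᶜ := hball (Metric.mem_ball.2 hzx)
      exact fun hw => hz (subset_closure hw)
    · intro hQmem
      obtain ⟨⟨n, k₀⟩, hp⟩ := Set.mem_iUnion.1 hQmem
      have hFU : (W n)ᶜ ⊆ U := by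
        intro w hw
        by_contra hwU
        have hwc : w ∈ Uᶜ := hwU
        have : w ∈ ⋂ n, W n := hWint ▸ hwc
        exact hw (Set.mem_iInter.1 this n)
      refine hFU ?_
      by_contra hfW'
      have hfW : f (x, y) ∈ W n := not_not.1 hfW'
      have hO : IsOpen ((fun x' => f (x', y)) ⁻¹' (W n)) := (hWopen n).preimage (hcont y)
      obtain ⟨ε, hε, hball⟩ := Metric.isOpen_iff.1 hO x hfW
      obtain ⟨k, hk⟩ := exists_pow_lt_of_lt_one hε (show (1/2:ℝ) < 1 by norm_num)
      obtain ⟨m, z, hxz⟩ := hVcov (k₀ + k) x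
      have hmem := Set.mem_iInter.1 hp k m z hxz
      have hdist : dist x z < (1/2:ℝ) ^ (k₀ + k) :=
        Metric.mem_ball.1 (hVball (k₀ + k) m z hxz)
      have hzx : dist z x < ε := by
        rw [dist_comm]
        calc dist x z < (1/2:ℝ) ^ (k₀ + k) := hdist
          _ ≤ (1/2:ℝ) ^ k :=
            pow_le_pow_of_le_one (by norm_num) (by norm_num) (Nat.le_add_left _ _)
          _ < ε := hk
      exact hmem (hball (Metric.mem_ball.2 hzx))
  rw [hmain]
  refine addClass_iUnion_lt _ fun p => ⟨α, ?_, hQcompl p.1 p.2⟩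
  rw [Ordinal.add_one_eq_succ]
  exact Order.lt_succ α
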